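/- Let d ≥ 1, let a : ℝ^d → ℝ^d be continuously differentiable with vanishing divergence ∇·a = 0, let φ : ℝ^d → ℝ be twice continuously differentiable, and let ψ : ℝ^d → ℂ be twice continuously differentiable with compact support. Then ∫_{ℝ^d} φ(x) ∑_{j=1}^{d} |i ∂_j ψ(x) + a_j(x) ψ(x)|² dx = (1/2) ∫_{ℝ^d} (Δφ)(x) |ψ(x)|² dx + Re ∫_{ℝ^d} \overline{ψ(x)} φ(x) [ −Δψ(x) + 2i a(x)·∇ψ(x) + |a(x)|² ψ(x) ] dx. -/

import Mathlib

open MeasureTheory Function Set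


lemma MIBP.integral_dirDeriv_eq_zero {n : ℕ} (G : (Fin (n+1) → ℝ) → ℝ)
    (hG : ContDiff ℝ 1 G) (hGc : HasCompactSupport G) (j : Fin (n+1)) :
    ∫ x, fderiv ℝ G x (Pi.single j 1) = 0 := by
  obtain ⟨R, hR0, hR⟩ : ∃ R, 0 < R ∧ tsupport G ⊆ Metric.ball 0 R :=
    (hGc.isBounded.subset_ball_lt 0 0).imp fun R h => ⟨h.1, h.2⟩
  have hmem : ∀ x ∈ tsupport G, ∀ i, x i ∈ Set.Ioo (-R) R := by
    intro x hx i
    have hx' : ‖x‖ < R := by simpa [Metric.mem_ball] using hR hx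
    have : ‖x i‖ ≤ ‖x‖ := norm_le_pi_norm x i
    have : |x i| < R := lt_of_le_of_lt (by simpa using this) hx'
    exact abs_lt.mp this
  set a : Fin (n+1) → ℝ := fun _ => -R with ha
  set b : Fin (n+1) → ℝ := fun _ => R with hb
  have hle : a ≤ b := fun i => by simp [ha, hb]; linarith
  set f : Fin (n+1) → (Fin (n+1) → ℝ) → ℝ := fun i => if i = j then G else 0 with hf
  set f' : Fin (n+1) → (Fin (n+1) → ℝ) → (Fin (n+1) → ℝ) →L[ℝ] ℝ :=
    fun i x => if i = j then fderiv ℝ G x else 0 with hf'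
  have hGd : Differentiable ℝ G := hG.differentiable one_ne_zero
  have hfd : Continuous fun x => fderiv ℝ G x :=
    (hG.fderiv_right (m := 0) (by norm_num)).continuous
  have hcont : Continuous fun x => fderiv ℝ G x (Pi.single j 1) :=
    hfd.clm_apply continuous_const
  have hsum : ∀ x, (∑ i, (ContinuousLinearMap.pi fun i => f' i x) (Pi.single i 1) i)
      = fderiv ℝ G x (Pi.single j 1) := by
    intro x
    rw [Finset.sum_eq_single j]
    · simp [hf']
    · intro i _ hij; simp [hf', hij]
    · simp
  have key := integral_divergence_of_hasFDerivAt_off_countable a b hle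
    (fun x i => f i x) (fun x => ContinuousLinearMap.pi fun i => f' i x) ∅ countable_empty
    ?_ ?_ ?_
  · -- use key
    rw [show (∫ x in Icc a b, ∑ i, (ContinuousLinearMap.pi fun i => f' i x) (Pi.single i 1) i)
        = ∫ x in Icc a b, fderiv ℝ G x (Pi.single j 1) from by simp_rw [hsum]] at key
    have hzero : ∀ x ∉ Icc a b, fderiv ℝ G x (Pi.single j 1) = 0 := by
      intro x hx
      have : x ∉ tsupport G := by
        intro hxt
        exact hx ⟨fun i => (hmem x hxt i).1.le, fun i => (hmem x hxt i).2.le⟩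
      have h2 : fderiv ℝ G x = 0 := by
        by_contra h
        exact this (support_fderiv_subset ℝ h)
      simp [h2]
    rw [setIntegral_eq_integral_of_forall_compl_eq_zero hzero] at key
    rw [key]
    apply Finset.sum_eq_zero
    intro i _
    have hfront : ∀ x, f i (Fin.insertNth i (b i) x) = 0 := by
      intro x
      by_cases hij : i = j
      · subst hij
        simp only [hf, if_pos rfl]
        apply image_eq_zero_of_notMem_tsupport
        intro hxt
        have := (hmem _ hxt i).2
        simp [hb] at this
      · simp [hf, hij]
    have hback : ∀ x, f i (Fin.insertNth i (a i) x) = 0 := by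
      intro x
      by_cases hij : i = j
      · subst hij
        simp only [hf, if_pos rfl]
        apply image_eq_zero_of_notMem_tsupport
        intro hxt
        have := (hmem _ hxt i).1
        simp [ha] at this
      · simp [hf, hij]
    simp [hfront, hback]
  · -- continuity on Icc
    apply continuousOn_pi.2
    intro i
    by_cases hij : i = j
    · subst hij; simp only [hf, if_pos rfl]; exact hG.continuous.continuousOn
    · simp only [hf, if_neg hij]; exact continuousOn_const
  · -- differentiability
    intro x _
    apply hasFDerivAt_pi.2
    intro i
    by_cases hij : i = j
    · subst hij; simp only [hf, hf', if_pos rfl]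
      exact (hGd x).hasFDerivAt
    · simp only [hf, hf', if_neg hij]
      exact hasFDerivAt_const 0 x
  · -- integrability
    have : Continuous fun x => ∑ i, (ContinuousLinearMap.pi fun i => f' i x) (Pi.single i 1) i := by
      simp_rw [hsum]; exact hcont
    exact this.continuousOn.integrableOn_compact isCompact_Icc


lemma MIBP.hn2 (v : ℂ) : ‖v‖^2 = v.re^2 + v.im^2 := by
  rw [Complex.sq_norm, Complex.normSq_apply]; ring

lemma MIBP.perj {n : ℕ} (φ : (Fin (n+1) → ℝ) → ℝ) (hφ : ContDiff ℝ 2 φ)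
    (ψ : (Fin (n+1) → ℝ) → ℂ) (hψ : ContDiff ℝ 2 ψ) (hψc : HasCompactSupport ψ)
    (j : Fin (n+1)) :
    ∫ x, (φ x * ‖fderiv ℝ ψ x (Pi.single j 1)‖^2
      + ((starRingEnd ℂ) (ψ x) * (φ x : ℂ)
          * fderiv ℝ (fun y => fderiv ℝ ψ y (Pi.single j 1)) x (Pi.single j 1)).re
      - (1/2) * fderiv ℝ (fun y => fderiv ℝ φ y (Pi.single j 1)) x (Pi.single j 1) * ‖ψ x‖^2)
      = 0 := by
  set ej : Fin (n+1) → ℝ := Pi.single j 1 with hej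
  set Dψ : (Fin (n+1) → ℝ) → ℂ := fun y => fderiv ℝ ψ y ej with hDψdef
  set Dφ : (Fin (n+1) → ℝ) → ℝ := fun y => fderiv ℝ φ y ej with hDφdef
  set cj : (Fin (n+1) → ℝ) → ℂ := fun y => (starRingEnd ℂ) (ψ y) with hcjdef
  set G : (Fin (n+1) → ℝ) → ℝ :=
    fun y => φ y * (cj y * Dψ y).re - (1/2) * Dφ y * (cj y * ψ y).re with hGdef
  have hDψ1 : ContDiff ℝ 1 Dψ :=
    (hψ.fderiv_right (m := 1) (by norm_num)).clm_apply contDiff_const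
  have hDφ1 : ContDiff ℝ 1 Dφ :=
    (hφ.fderiv_right (m := 1) (by norm_num)).clm_apply contDiff_const
  have hcj2 : ContDiff ℝ 2 cj :=
    (Complex.conjCLE.toContinuousLinearMap.contDiff).comp hψ
  have hG1 : ContDiff ℝ 1 G := by
    apply ContDiff.sub
    · exact (hφ.of_le one_le_two).mul
        ((Complex.reCLM.contDiff).comp ((hcj2.of_le one_le_two).mul hDψ1))
    · exact (contDiff_const.mul hDφ1).mul
        ((Complex.reCLM.contDiff).comp ((hcj2.mul hψ).of_le one_le_two))
  have hGc : HasCompactSupport G := by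
    apply HasCompactSupport.intro hψc.isCompact
    intro x hx
    have h0 : ψ x = 0 := image_eq_zero_of_notMem_tsupport hx
    simp [hGdef, hcjdef, h0]
  have hpt : ∀ x, φ x * ‖Dψ x‖^2 + (cj x * (φ x : ℂ) * fderiv ℝ Dψ x ej).re
      - (1/2) * fderiv ℝ Dφ x ej * ‖ψ x‖^2 = fderiv ℝ G x ej := by
    intro x
    have hψx : HasFDerivAt ψ (fderiv ℝ ψ x) x :=
      ((hψ.differentiable two_ne_zero) x).hasFDerivAt
    have hφx : HasFDerivAt φ (fderiv ℝ φ x) x :=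
      ((hφ.differentiable two_ne_zero) x).hasFDerivAt
    have hDψx : HasFDerivAt Dψ (fderiv ℝ Dψ x) x :=
      ((hDψ1.differentiable one_ne_zero) x).hasFDerivAt
    have hDφx : HasFDerivAt Dφ (fderiv ℝ Dφ x) x :=
      ((hDφ1.differentiable one_ne_zero) x).hasFDerivAt
    have hcjx : HasFDerivAt cj
        (Complex.conjCLE.toContinuousLinearMap.comp (fderiv ℝ ψ x)) x :=
      (Complex.conjCLE.toContinuousLinearMap.hasFDerivAt).comp x hψx
    have hB : HasFDerivAt (fun y => cj y * Dψ y)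
        (cj x • fderiv ℝ Dψ x
          + Dψ x • (Complex.conjCLE.toContinuousLinearMap.comp (fderiv ℝ ψ x))) x :=
      hcjx.mul hDψx
    have hBre := (Complex.reCLM.hasFDerivAt).comp x hB
    have hA := hφx.mul hBre
    have hN : HasFDerivAt (fun y => cj y * ψ y)
        (cj x • fderiv ℝ ψ x
          + ψ x • (Complex.conjCLE.toContinuousLinearMap.comp (fderiv ℝ ψ x))) x :=
      hcjx.mul hψx
    have hNre := (Complex.reCLM.hasFDerivAt).comp x hN
    have h12 : HasFDerivAt (fun y => (1/2 : ℝ) * Dφ y) ((1/2 : ℝ) • fderiv ℝ Dφ x) x :=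
      hDφx.const_mul (1/2)
    have hG'' : HasFDerivAt G _ x := hA.sub (h12.mul hNre)
    rw [hG''.fderiv]
    simp only [ContinuousLinearMap.sub_apply, ContinuousLinearMap.add_apply,
      ContinuousLinearMap.smul_apply, ContinuousLinearMap.comp_apply,
      ContinuousLinearMap.coe_smul', Pi.smul_apply, Complex.reCLM_apply,
      ContinuousLinearMap.coe_comp', Function.comp_apply, smul_eq_mul,
      Complex.real_smul, Complex.smul_re, Complex.conjCLE_apply]
    simp only [hcjdef, MIBP.hn2, Complex.mul_re, Complex.add_re, Complex.add_im,
      Complex.mul_im, Complex.conj_re, Complex.conj_im, Complex.ofReal_re,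
      Complex.ofReal_im, ContinuousLinearEquiv.coe_coe, Complex.conjCLE_apply]
    simp only [show (fderiv ℝ ψ x) ej = Dψ x from rfl, Complex.conj_re, Complex.conj_im]
    ring
  calc ∫ x, (φ x * ‖Dψ x‖^2 + (cj x * (φ x : ℂ) * fderiv ℝ Dψ x ej).re
        - (1/2) * fderiv ℝ Dφ x ej * ‖ψ x‖^2)
      = ∫ x, fderiv ℝ G x ej := by
        apply integral_congr_ae
        exact Filter.Eventually.of_forall fun x => hpt x
    _ = 0 := MIBP.integral_dirDeriv_eq_zero G hG1 hGc j


lemma MIBP.scalar (p q c : ℝ) (z u w : ℂ) :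
    p * ‖Complex.I * u + (c : ℂ) * z‖ ^ 2
      - ((1/2) * (q * ‖z‖ ^ 2)
        + ((starRingEnd ℂ) z * (p : ℂ)
            * (-w + 2 * Complex.I * ((c : ℂ) * u) + ((c ^ 2 : ℝ) : ℂ) * z)).re)
      = p * ‖u‖ ^ 2 + ((starRingEnd ℂ) z * (p : ℂ) * w).re - 1/2 * q * ‖z‖ ^ 2 := by
  simp only [MIBP.hn2, Complex.mul_re, Complex.mul_im, Complex.add_re, Complex.add_im,
    Complex.neg_re, Complex.neg_im, Complex.I_re, Complex.I_im, Complex.ofReal_re,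
    Complex.ofReal_im, Complex.conj_re, Complex.conj_im, Complex.re_ofNat, Complex.im_ofNat]
  ring

/-- Magnetic integration-by-parts identity: for a divergence-free `C¹` vector potential `a`,
a `C²` real function `φ` and a `C²` compactly supported complex function `ψ`,
`⟨φ, |(i∇+a)ψ|²⟩ = (1/2)⟨∇²φ, |ψ|²⟩ + Re⟨ψφ, (i∇+a)²ψ⟩`. -/
theorem magnetic_integration_by_parts
    (d : ℕ) (hd : 1 ≤ d)
    (a : (Fin d → ℝ) → (Fin d → ℝ)) (ha : ContDiff ℝ 1 a)
    (hdiv : ∀ x, ∑ j, fderiv ℝ (fun y => a y j) x (Pi.single j 1) = 0)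
    (φ : (Fin d → ℝ) → ℝ) (hφ : ContDiff ℝ 2 φ)
    (ψ : (Fin d → ℝ) → ℂ) (hψ : ContDiff ℝ 2 ψ) (hψc : HasCompactSupport ψ) :
    ∫ x, φ x * ∑ j, ‖Complex.I * fderiv ℝ ψ x (Pi.single j 1) + (a x j : ℂ) * ψ x‖ ^ 2
      = (1 / 2) * (∫ x, (∑ j, fderiv ℝ (fun y => fderiv ℝ φ y (Pi.single j 1)) x
            (Pi.single j 1)) * ‖ψ x‖ ^ 2)
        + (∫ x, (starRingEnd ℂ) (ψ x) * (φ x : ℂ) *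
            (-(∑ j, fderiv ℝ (fun y => fderiv ℝ ψ y (Pi.single j 1)) x (Pi.single j 1))
              + 2 * Complex.I * ∑ j, (a x j : ℂ) * fderiv ℝ ψ x (Pi.single j 1)
              + ((∑ j, (a x j) ^ 2 : ℝ) : ℂ) * ψ x)).re := by
  obtain ⟨n, rfl⟩ : ∃ n, d = n + 1 := ⟨d - 1, by omega⟩
  clear hd hdiv
  -- abbreviations
  set u : Fin (n+1) → (Fin (n+1) → ℝ) → ℂ :=
    fun j x => fderiv ℝ ψ x (Pi.single j 1) with hu_def
  set w : Fin (n+1) → (Fin (n+1) → ℝ) → ℂ :=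
    fun j x => fderiv ℝ (fun y => fderiv ℝ ψ y (Pi.single j 1)) x (Pi.single j 1) with hw_def
  set q : Fin (n+1) → (Fin (n+1) → ℝ) → ℝ :=
    fun j x => fderiv ℝ (fun y => fderiv ℝ φ y (Pi.single j 1)) x (Pi.single j 1) with hq_def
  -- continuity facts
  have hu1 : ∀ j, ContDiff ℝ 1 (u j) := fun j =>
    (hψ.fderiv_right (m := 1) (by norm_num)).clm_apply contDiff_const
  have huc : ∀ j, Continuous (u j) := fun j => (hu1 j).continuous
  have hwc : ∀ j, Continuous (w j) := fun j =>
    (((hu1 j).fderiv_right (m := 0) (by norm_num)).clm_apply contDiff_const).continuous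
  have hqφ1 : ∀ j, ContDiff ℝ 1 (fun x => fderiv ℝ φ x (Pi.single j 1)) := fun j =>
    (hφ.fderiv_right (m := 1) (by norm_num)).clm_apply contDiff_const
  have hqc : ∀ j, Continuous (q j) := fun j =>
    (((hqφ1 j).fderiv_right (m := 0) (by norm_num)).clm_apply contDiff_const).continuous
  have hac : ∀ j, Continuous (fun x => a x j) := fun j =>
    (continuous_apply j).comp ha.continuous
  have hφc : Continuous φ := hφ.continuous
  have hψcont : Continuous ψ := hψ.continuous
  have hconjc : Continuous (fun x => (starRingEnd ℂ) (ψ x)) :=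
    Complex.conjCLE.continuous.comp hψcont
  -- vanishing outside tsupport ψ
  have hv0 : ∀ x ∉ tsupport ψ, ψ x = 0 := fun x hx => image_eq_zero_of_notMem_tsupport hx
  have hv1 : ∀ j, ∀ x ∉ tsupport ψ, u j x = 0 := by
    intro j x hx
    have h : fderiv ℝ ψ x = 0 := by
      by_contra h; exact hx (support_fderiv_subset ℝ h)
    simp [hu_def, h]
  have hv2 : ∀ j, ∀ x ∉ tsupport ψ, w j x = 0 := by
    intro j x hx
    have hsub : tsupport (fun y => fderiv ℝ ψ y (Pi.single j 1)) ⊆ tsupport ψ :=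
      closure_minimal (fun y hy => by
        by_contra hyt; exact hy (hv1 j y hyt)) (isClosed_tsupport ψ)
    have h : fderiv ℝ (fun y => fderiv ℝ ψ y (Pi.single j 1)) x = 0 := by
      by_contra h
      exact hx (hsub (support_fderiv_subset ℝ h))
    simp [hw_def, h]
  -- generic integrability
  have hint : ∀ {E : Type} [NormedAddCommGroup E] (f : (Fin (n+1) → ℝ) → E),
      Continuous f → (∀ x ∉ tsupport ψ, f x = 0) → Integrable f := by
    intro E _ f hf h0
    exact hf.integrable_of_hasCompactSupport (HasCompactSupport.intro hψc.isCompact h0)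
  -- the four integrands
  have hI1 : Integrable (fun x => φ x * ∑ j, ‖Complex.I * u j x + (a x j : ℂ) * ψ x‖ ^ 2) := by
    apply hint
    · exact hφc.mul (continuous_finset_sum _ fun j _ =>
        ((continuous_const.mul (huc j)).add
          ((Complex.continuous_ofReal.comp (hac j)).mul hψcont)).norm.pow 2)
    · intro x hx; simp [hv0 x hx, hv1 _ x hx]
  have hI2 : Integrable (fun x => (∑ j, q j x) * ‖ψ x‖ ^ 2) := by
    apply hint
    · exact (continuous_finset_sum _ fun j _ => hqc j).mul (hψcont.norm.pow 2)
    · intro x hx; simp [hv0 x hx]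
  have hI3 : Integrable (fun x => (starRingEnd ℂ) (ψ x) * (φ x : ℂ) *
      (-(∑ j, w j x) + 2 * Complex.I * ∑ j, (a x j : ℂ) * u j x
        + ((∑ j, (a x j) ^ 2 : ℝ) : ℂ) * ψ x)) := by
    apply hint
    · apply (hconjc.mul (Complex.continuous_ofReal.comp hφc)).mul
      apply Continuous.add
      apply Continuous.add
      · exact (continuous_finset_sum _ fun j _ => hwc j).neg
      · exact continuous_const.mul (continuous_finset_sum _ fun j _ =>
          (Complex.continuous_ofReal.comp (hac j)).mul (huc j))
      · exact (Complex.continuous_ofReal.comp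
          (continuous_finset_sum _ fun j _ => (hac j).pow 2)).mul hψcont
    · intro x hx; simp [hv0 x hx]
  have hIP : ∀ j : Fin (n+1), Integrable (fun x =>
      φ x * ‖u j x‖ ^ 2 + ((starRingEnd ℂ) (ψ x) * (φ x : ℂ) * w j x).re
        - 1/2 * q j x * ‖ψ x‖ ^ 2) := by
    intro j
    apply hint
    · apply Continuous.sub
      · exact (hφc.mul ((huc j).norm.pow 2)).add
          (Complex.continuous_re.comp
            ((hconjc.mul (Complex.continuous_ofReal.comp hφc)).mul (hwc j)))
      · exact (continuous_const.mul (hqc j)).mul (hψcont.norm.pow 2)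
    · intro x hx; simp [hv0 x hx, hv1 j x hx, hv2 j x hx]
  -- pointwise identity
  have hpt : ∀ x, (φ x * ∑ j, ‖Complex.I * u j x + (a x j : ℂ) * ψ x‖ ^ 2)
      - ((1/2) * ((∑ j, q j x) * ‖ψ x‖ ^ 2)
        + (((starRingEnd ℂ) (ψ x) * (φ x : ℂ) *
            (-(∑ j, w j x) + 2 * Complex.I * ∑ j, (a x j : ℂ) * u j x
              + ((∑ j, (a x j) ^ 2 : ℝ) : ℂ) * ψ x))).re)
      = ∑ j, (φ x * ‖u j x‖ ^ 2 + ((starRingEnd ℂ) (ψ x) * (φ x : ℂ) * w j x).re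
          - 1/2 * q j x * ‖ψ x‖ ^ 2) := by
    intro x
    have e1 : φ x * ∑ j, ‖Complex.I * u j x + (a x j : ℂ) * ψ x‖ ^ 2
        = ∑ j, φ x * ‖Complex.I * u j x + (a x j : ℂ) * ψ x‖ ^ 2 := Finset.mul_sum _ _ _
    have e2 : (1/2 : ℝ) * ((∑ j, q j x) * ‖ψ x‖ ^ 2)
        = ∑ j, (1/2 : ℝ) * (q j x * ‖ψ x‖ ^ 2) := by
      rw [Finset.sum_mul, Finset.mul_sum]
    have e3 : ((starRingEnd ℂ) (ψ x) * (φ x : ℂ) *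
            (-(∑ j, w j x) + 2 * Complex.I * ∑ j, (a x j : ℂ) * u j x
              + ((∑ j, (a x j) ^ 2 : ℝ) : ℂ) * ψ x))
        = ∑ j, (starRingEnd ℂ) (ψ x) * (φ x : ℂ) *
            (-(w j x) + 2 * Complex.I * ((a x j : ℂ) * u j x)
              + (((a x j) ^ 2 : ℝ) : ℂ) * ψ x) := by
      rw [← Finset.mul_sum]
      congr 1
      rw [Finset.sum_add_distrib, Finset.sum_add_distrib]
      congr 1
      · congr 1
        · rw [← Finset.sum_neg_distrib]
        · rw [← Finset.mul_sum]
      · rw [← Finset.sum_mul]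
        congr 1
        push_cast
        ring
    rw [e1, e2, e3, Complex.re_sum, ← Finset.sum_add_distrib, ← Finset.sum_sub_distrib]
    exact Finset.sum_congr rfl fun j _ => MIBP.scalar (φ x) (q j x) (a x j) (ψ x) (u j x) (w j x)
  -- assemble
  have hI3re : Integrable (fun x => ((starRingEnd ℂ) (ψ x) * (φ x : ℂ) *
      (-(∑ j, w j x) + 2 * Complex.I * ∑ j, (a x j : ℂ) * u j x
        + ((∑ j, (a x j) ^ 2 : ℝ) : ℂ) * ψ x)).re) := hI3.re
  rw [← sub_eq_zero]
  have hsplit : (1 / 2 : ℝ) * (∫ x, (∑ j, q j x) * ‖ψ x‖ ^ 2)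
        + (∫ x, (starRingEnd ℂ) (ψ x) * (φ x : ℂ) *
            (-(∑ j, w j x) + 2 * Complex.I * ∑ j, (a x j : ℂ) * u j x
              + ((∑ j, (a x j) ^ 2 : ℝ) : ℂ) * ψ x)).re
      = ∫ x, ((1/2) * ((∑ j, q j x) * ‖ψ x‖ ^ 2)
          + (((starRingEnd ℂ) (ψ x) * (φ x : ℂ) *
              (-(∑ j, w j x) + 2 * Complex.I * ∑ j, (a x j : ℂ) * u j x
                + ((∑ j, (a x j) ^ 2 : ℝ) : ℂ) * ψ x))).re) := by
    rw [integral_add (hI2.const_mul _) hI3re, integral_const_mul]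
    congr 1
    have h := integral_re hI3
    simp only [RCLike.re_to_complex] at h
    exact h.symm
  have hRHS : Integrable (fun x => (1/2 : ℝ) * ((∑ j, q j x) * ‖ψ x‖ ^ 2)
      + (((starRingEnd ℂ) (ψ x) * (φ x : ℂ) *
          (-(∑ j, w j x) + 2 * Complex.I * ∑ j, (a x j : ℂ) * u j x
            + ((∑ j, (a x j) ^ 2 : ℝ) : ℂ) * ψ x))).re) := (hI2.const_mul _).add hI3re
  rw [hsplit, ← integral_sub hI1 hRHS]
  rw [integral_congr_ae (Filter.Eventually.of_forall hpt)]
  rw [integral_finset_sum _ fun j _ => hIP j]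
  exact Finset.sum_eq_zero fun j _ => MIBP.perj φ hφ ψ hψ hψc j
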